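/- Let g ≥ 3 and let G be a graph with no cycle of length at most g (girth greater than g). Let A be a set of g+1 vertices of G. Then G[A] is a cycle of length g+1 if and only if G[A \ {a}] is connected for every a ∈ A. -/

import Mathlib

open SimpleGraph

private lemma aux_cycle_length_lb {V : Type*} {G : SimpleGraph V} {g : ℕ}
    (hgirth : (g : ℕ∞) < G.egirth) {v : V} {c : G.Walk v v} (hc : c.IsCycle) :
    g + 1 ≤ c.length := by
  have h1 : G.egirth ≤ (c.length : ℕ∞) := by
    refine iInf_le_of_le v (iInf_le_of_le c ?_)
    exact iInf_le _ hc
  have h2 : (g : ℕ∞) < (c.length : ℕ∞) := lt_of_lt_of_le hgirth h1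
  have : g < c.length := by exact_mod_cast h2
  omega

/-- Decompose a cycle at a vertex `a` of its support: two neighbours `b`, `d` of `a`
on the cycle and a path `r` from `d` to `b` avoiding `a`. -/
private lemma aux_cycle_decomp {W : Type*} [DecidableEq W] {H : SimpleGraph W} {v : W}
    {c : H.Walk v v} (hc : c.IsCycle) {a : W} (ha : a ∈ c.support) :
    ∃ (b d : W) (_h1 : H.Adj a b) (_h2 : H.Adj a d) (r : H.Walk d b),
      r.IsPath ∧ a ∉ r.support ∧ r.length + 2 = c.length ∧
      (∀ x, x ∈ c.support ↔ x = a ∨ x ∈ r.support) ∧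
      (∀ e, e ∈ c.edges ↔ e = s(a, b) ∨ e = s(a, d) ∨ e ∈ r.edges) := by
  have hc' : (c.rotate a ha).IsCycle := (Walk.isCycle_rotate ha).mpr hc
  have hmemsup : ∀ x, x ∈ (c.rotate a ha).support ↔ x ∈ c.support := by
    intro x
    conv_rhs => rw [← c.take_spec ha]
    simp only [Walk.rotate, Walk.mem_support_append_iff]
    tauto
  have hmemedg : ∀ e, e ∈ (c.rotate a ha).edges ↔ e ∈ c.edges := by
    intro e
    conv_rhs => rw [← c.take_spec ha]
    simp only [Walk.rotate, Walk.edges_append, List.mem_append]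
    tauto
  have hlenrot : (c.rotate a ha).length = c.length := by
    conv_rhs => rw [← c.take_spec ha]
    simp only [Walk.rotate, Walk.length_append]
    omega
  set w : H.Walk a a := c.rotate a ha with hw
  clear_value w
  cases w with
  | nil => exact absurd hc' (Walk.IsCycle.not_of_nil)
  | @cons _ b₀ _ h q =>
    rw [Walk.cons_isCycle_iff] at hc'
    obtain ⟨hq, hqe⟩ := hc'
    have hqrev : q.reverse.IsPath := hq.reverse
    cases h' : q.reverse with
    | nil => exact (H.irrefl h).elim
    | @cons _ d _ h₂ r =>
      rw [h', Walk.cons_isPath_iff] at hqrev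
      obtain ⟨hr, har⟩ := hqrev
      refine ⟨b₀, d, h, h₂, r, hr, har, ?_, ?_, ?_⟩
      · -- length
        have h1 : q.reverse.length = r.length + 1 := by rw [h']; simp
        have h2 : q.reverse.length = q.length := q.length_reverse
        have h3 : (Walk.cons h q).length = q.length + 1 := by simp
        omega
      · -- support
        intro x
        rw [← hmemsup x]
        have hqsup : x ∈ q.support ↔ x ∈ q.reverse.support := by
          rw [Walk.support_reverse, List.mem_reverse]
        simp only [Walk.support_cons, List.mem_cons]
        rw [hqsup, h']
        simp only [Walk.support_cons, List.mem_cons]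
        tauto
      · -- edges
        intro e
        rw [← hmemedg e]
        have hqedg : e ∈ q.edges ↔ e ∈ q.reverse.edges := by
          rw [Walk.edges_reverse, List.mem_reverse]
        simp only [Walk.edges_cons, List.mem_cons]
        rw [hqedg, h']
        simp only [Walk.edges_cons, List.mem_cons]

/-- In a graph of girth `> g`, a cycle of length `g+1` has no chords: every edge of the ambient
graph between vertices of the cycle is an edge of the cycle. -/
private lemma aux_chord_mem {V : Type*} [DecidableEq V] {G : SimpleGraph V} {g : ℕ} (hg : 3 ≤ g)
    (hgirth : (g : ℕ∞) < G.egirth) {v x y : V} {c : G.Walk v v} (hc : c.IsCycle)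
    (hlen : c.length = g + 1) (hadj : G.Adj x y) (hx : x ∈ c.support) (hy : y ∈ c.support) :
    s(x, y) ∈ c.edges := by
  by_contra hne
  obtain ⟨b, d, h1, h2, r, hr, hxr, hrlen, hsup, hedg⟩ := aux_cycle_decomp hc hx
  have hyr : y ∈ r.support := by
    rcases (hsup y).mp hy with rfl | hmem
    · exact absurd rfl hadj.ne
    · exact hmem
  have hyb : y ≠ b := by rintro rfl; exact hne ((hedg _).mpr (Or.inl rfl))
  have hyd : y ≠ d := by rintro rfl; exact hne ((hedg _).mpr (Or.inr (Or.inl rfl)))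
  set r1 := r.takeUntil y hyr with hr1def
  set r2 := r.dropUntil y hyr with hr2def
  have hr1 : r1.IsPath := hr.takeUntil hyr
  have hr2 : r2.IsPath := hr.dropUntil hyr
  have hxr1 : x ∉ r1.support := fun hmem => hxr (r.support_takeUntil_subset hyr hmem)
  have hxr2 : x ∉ r2.support := fun hmem => hxr (r.support_dropUntil_subset hyr hmem)
  -- first cycle : y → x → d → … → y
  have hc1 : (Walk.cons hadj.symm (Walk.cons h2 r1)).IsCycle := by
    rw [Walk.cons_isCycle_iff, Walk.cons_isPath_iff]
    refine ⟨⟨hr1, hxr1⟩, ?_⟩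
    simp only [Walk.edges_cons, List.mem_cons]
    rintro (he | he)
    · rw [Sym2.eq_iff] at he
      rcases he with ⟨hyx, -⟩ | ⟨hyd', -⟩
      · exact hadj.ne' hyx
      · exact hyd hyd'
    · exact hxr1 (Walk.snd_mem_support_of_mem_edges r1 he)
  -- second cycle : y → x → b → … (reverse of r2) … → y
  have hc2 : (Walk.cons hadj.symm (Walk.cons h1 r2.reverse)).IsCycle := by
    rw [Walk.cons_isCycle_iff, Walk.cons_isPath_iff]
    refine ⟨⟨hr2.reverse, ?_⟩, ?_⟩
    · rw [Walk.support_reverse, List.mem_reverse]; exact hxr2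
    · simp only [Walk.edges_cons, List.mem_cons]
      rintro (he | he)
      · rw [Sym2.eq_iff] at he
        rcases he with ⟨hyx, -⟩ | ⟨hyb', -⟩
        · exact hadj.ne' hyx
        · exact hyb hyb'
      · rw [Walk.edges_reverse, List.mem_reverse] at he
        exact hxr2 (Walk.snd_mem_support_of_mem_edges r2 he)
  have hlb1 := aux_cycle_length_lb hgirth hc1
  have hlb2 := aux_cycle_length_lb hgirth hc2
  have hsplit : r1.length + r2.length = r.length := by
    have := congrArg Walk.length (r.take_spec hyr)
    rw [Walk.length_append] at this
    exact this
  have hl1 : (Walk.cons hadj.symm (Walk.cons h2 r1)).length = r1.length + 2 := by simp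
  have hl2 : (Walk.cons hadj.symm (Walk.cons h1 r2.reverse)).length = r2.length + 2 := by
    simp
  rw [hl1] at hlb1
  rw [hl2] at hlb2
  omega

private lemma aux_exists_cycle {W : Type*} [Fintype W] [DecidableEq W] {H : SimpleGraph W}
    [DecidableRel H.Adj] (hconn : H.Connected) (hdeg : ∀ v : W, 2 ≤ H.degree v) :
    ∃ (v : W) (c : H.Walk v v), c.IsCycle := by
  by_contra hcon
  push_neg at hcon
  have hac : H.IsAcyclic := fun v c hc => hcon v c hc
  have htree : H.IsTree := (isTree_iff H).mpr ⟨hconn, hac⟩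
  have hcard := htree.card_edgeFinset
  have hsum := H.sum_degrees_eq_twice_card_edges
  have h2 : 2 * Fintype.card W ≤ ∑ v, H.degree v := by
    calc 2 * Fintype.card W = ∑ _v : W, 2 := by simp [mul_comm]
      _ ≤ ∑ v, H.degree v := Finset.sum_le_sum fun i _ => hdeg i
  have hpos : 0 < Fintype.card W := Fintype.card_pos_iff.mpr hconn.nonempty
  omega

private lemma aux_cycle_support_all {W : Type*} [Fintype W] [DecidableEq W] {H : SimpleGraph W}
    {v : W} {c : H.Walk v v} (hc : c.IsCycle) (hlen : c.length = Fintype.card W) :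
    ∀ x : W, x ∈ c.support := by
  have hnd : c.support.tail.Nodup := hc.support_nodup
  have hlen' : c.support.tail.length = Fintype.card W := by
    have h1 := c.length_support
    have h2 : c.support.tail.length = c.support.length - 1 := by simp
    omega
  intro x
  have huniv : c.support.tail.toFinset = Finset.univ := by
    apply Finset.eq_univ_of_card
    rw [List.toFinset_card_of_nodup hnd, hlen', Fintype.card]
  have hx : x ∈ c.support.tail := by
    rw [← List.mem_toFinset, huniv]; exact Finset.mem_univ x
  exact List.mem_of_mem_tail hx

private lemma aux_degree_induce {V : Type*} [DecidableEq V] (G : SimpleGraph V)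
    [DecidableRel G.Adj] (A : Finset V) {a : V} (ha : a ∈ (A : Set V))
    [Fintype ↥(A : Set V)] :
    (G.induce (A : Set V)).degree ⟨a, ha⟩ = (A.filter fun b => G.Adj a b).card := by
  rw [← card_neighborFinset_eq_degree]
  refine Finset.card_bij (fun b _ => (b : V)) ?_ ?_ ?_
  · intro b hb
    rw [mem_neighborFinset] at hb
    simp only [comap_adj, Function.Embedding.coe_subtype] at hb
    exact Finset.mem_filter.mpr ⟨b.2, hb⟩
  · intro b1 _ b2 _ hbb
    exact Subtype.ext hbb
  · intro b hb
    obtain ⟨hbA, hab⟩ := Finset.mem_filter.mp hb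
    refine ⟨⟨b, hbA⟩, ?_, rfl⟩
    rw [mem_neighborFinset]
    simpa using hab

private lemma aux_exists_adj {W : Type*} {H : SimpleGraph W} (hconn : H.Connected) {u z : W}
    (hne : u ≠ z) : ∃ y, H.Adj u y := by
  obtain ⟨p⟩ := hconn.preconnected u z
  cases p with
  | nil => exact absurd rfl hne
  | cons h _ => exact ⟨_, h⟩

theorem stmt17 {V : Type*} [DecidableEq V] (G : SimpleGraph V) [DecidableRel G.Adj]
    (g : ℕ) (hg : 3 ≤ g) (hgirth : (g : ℕ∞) < G.egirth)
    (A : Finset V) (hA : A.card = g + 1) :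
    ((G.induce (A : Set V)).Connected ∧
        ∀ a ∈ A, (A.filter (fun b => G.Adj a b)).card = 2) ↔
      ∀ a ∈ A, (G.induce ((A.erase a : Finset V) : Set V)).Connected := by
  classical
  have hcardS : Fintype.card ↥(A : Set V) = g + 1 := by
    rw [← hA]; exact Fintype.card_coe A
  set ι : G.induce (A : Set V) ↪g G := Embedding.induce (A : Set V) with hι
  constructor
  · rintro ⟨hconn, hdeg⟩ a haA
    have haS : a ∈ (A : Set V) := haA
    have hdeg' : ∀ v : ↥(A : Set V), 2 ≤ (G.induce (A : Set V)).degree v := by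
      intro v
      rw [aux_degree_induce G A v.2, hdeg v.1 v.2]
    obtain ⟨v, c, hc⟩ := aux_exists_cycle hconn hdeg'
    have hcG : (c.map ι.toHom).IsCycle := hc.map ι.injective
    have hlb : g + 1 ≤ c.length := by
      have := aux_cycle_length_lb hgirth hcG
      rwa [Walk.length_map] at this
    have hub : c.length ≤ g + 1 := by
      have h1 := List.Nodup.length_le_card hc.support_nodup
      have h2 := c.length_support
      have h3 : c.support.tail.length = c.support.length - 1 := by simp
      rw [hcardS] at h1
      omega
    have hlen : c.length = Fintype.card ↥(A : Set V) := by omega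
    have hall := aux_cycle_support_all hc hlen
    obtain ⟨b, d, h1, h2, r, hr, har, hrlen, hsup, _⟩ := aux_cycle_decomp hc (hall ⟨a, haS⟩)
    have hconn' := (r.map ι.toHom).connected_induce_support
    have hset : {x | x ∈ (r.map ι.toHom).support} = ((A.erase a : Finset V) : Set V) := by
      ext x
      simp only [Set.mem_setOf_eq, Walk.support_map, List.mem_map, Finset.coe_erase,
        Set.mem_diff, Set.mem_singleton_iff, Finset.mem_coe]
      constructor
      · rintro ⟨u, hu, rfl⟩
        refine ⟨u.2, ?_⟩
        intro hua
        apply har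
        have : u = (⟨a, haS⟩ : ↥(A : Set V)) := Subtype.ext hua
        rwa [this] at hu
      · rintro ⟨hxA, hxa⟩
        refine ⟨⟨x, hxA⟩, ?_, rfl⟩
        rcases (hsup ⟨x, hxA⟩).mp (hall _) with heq | hmem
        · exact absurd (congrArg Subtype.val heq) hxa
        · exact hmem
    rwa [hset] at hconn'
  · intro h
    have hAne : A.Nonempty := by rw [← Finset.card_pos, hA]; omega
    -- minimum degree at least two
    have hmin : ∀ a ∈ A, 2 ≤ (A.filter fun b => G.Adj a b).card := by
      intro a haA
      by_contra hlt
      push_neg at hlt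
      have hcard_erase : (A.erase a).card = g := by
        rw [Finset.card_erase_of_mem haA, hA]; omega
      obtain ⟨w, hwA, hwa, hwN⟩ : ∃ w, w ∈ A ∧ w ≠ a ∧ ∀ b ∈ A, G.Adj a b → b = w := by
        rcases Finset.eq_empty_or_nonempty (A.filter fun b => G.Adj a b) with hN | ⟨b, hb⟩
        · obtain ⟨w, hw⟩ : (A.erase a).Nonempty := by
            rw [← Finset.card_pos, hcard_erase]; omega
          refine ⟨w, Finset.mem_of_mem_erase hw, Finset.ne_of_mem_erase hw, ?_⟩
          intro b hbA hadj
          exact absurd (Finset.mem_filter.mpr ⟨hbA, hadj⟩) (by simp [hN])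
        · obtain ⟨hbA, hab⟩ := Finset.mem_filter.mp hb
          refine ⟨b, hbA, hab.ne', ?_⟩
          intro b' hb'A hadj'
          by_contra hne
          have : 1 < (A.filter fun x => G.Adj a x).card :=
            Finset.one_lt_card.mpr ⟨b', Finset.mem_filter.mpr ⟨hb'A, hadj'⟩, b, hb, hne⟩
          omega
      have hconnw := h w hwA
      have haw : a ∈ ((A.erase w : Finset V) : Set V) := by
        simp only [Finset.coe_erase, Set.mem_diff, Set.mem_singleton_iff, Finset.mem_coe]
        exact ⟨haA, fun hh => hwa hh.symm⟩
      obtain ⟨z, hz⟩ : ((A.erase w).erase a).Nonempty := by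
        rw [← Finset.card_pos, Finset.card_erase_of_mem
          (Finset.mem_erase.mpr ⟨fun hh => hwa hh.symm, haA⟩)]
        have : g ≤ (A.erase w).card := by
          rw [Finset.card_erase_of_mem hwA, hA]; omega
        omega
      have hzA : (z : V) ∈ ((A.erase w : Finset V) : Set V) := Finset.mem_of_mem_erase hz
      have hza : z ≠ a := Finset.ne_of_mem_erase hz
      obtain ⟨y, hy⟩ := aux_exists_adj hconnw (u := ⟨a, haw⟩) (z := ⟨z, hzA⟩)
        (by simp [Subtype.ext_iff]; exact fun hh => hza hh.symm)
      simp only [comap_adj, Function.Embedding.coe_subtype] at hy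
      have hyAw : (y : V) ∈ A.erase w := y.2
      have := hwN y (Finset.mem_of_mem_erase hyAw) hy
      exact Finset.ne_of_mem_erase hyAw this
    obtain ⟨a0, ha0⟩ := hAne
    obtain ⟨b0, hb0A, hb0adj⟩ : ∃ b, b ∈ A ∧ G.Adj a0 b := by
      have h2 := hmin a0 ha0
      obtain ⟨b, hb⟩ : (A.filter fun b => G.Adj a0 b).Nonempty := by
        rw [← Finset.card_pos]; omega
      obtain ⟨hbA, hab⟩ := Finset.mem_filter.mp hb
      exact ⟨b, hbA, hab⟩
    have hconn : (G.induce (A : Set V)).Connected := by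
      have hu := induce_union_connected (h a0 ha0).preconnected (induce_pair_connected_of_adj hb0adj).preconnected
        ⟨b0, ⟨by
          simp only [Finset.coe_erase, Set.mem_diff, Set.mem_singleton_iff, Finset.mem_coe]
          exact ⟨hb0A, hb0adj.ne'⟩, Set.mem_insert_of_mem _ rfl⟩⟩
      have hsets : ((A.erase a0 : Finset V) : Set V) ∪ {a0, b0} = (A : Set V) := by
        ext x
        simp only [Finset.coe_erase, Set.mem_union, Set.mem_diff, Set.mem_singleton_iff,
          Finset.mem_coe, Set.mem_insert_iff]
        constructor
        · rintro (⟨hxA, _⟩ | rfl | rfl)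
          · exact hxA
          · exact ha0
          · exact hb0A
        · intro hxA
          by_cases hx0 : x = a0
          · exact Or.inr (Or.inl hx0)
          · exact Or.inl ⟨hxA, hx0⟩
      rwa [hsets] at hu
    have hdeg' : ∀ v : ↥(A : Set V), 2 ≤ (G.induce (A : Set V)).degree v := by
      intro v
      rw [aux_degree_induce G A v.2]
      exact hmin v.1 v.2
    obtain ⟨v, c, hc⟩ := aux_exists_cycle hconn hdeg'
    have hcG : (c.map ι.toHom).IsCycle := hc.map ι.injective
    have hlb : g + 1 ≤ c.length := by
      have := aux_cycle_length_lb hgirth hcG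
      rwa [Walk.length_map] at this
    have hub : c.length ≤ g + 1 := by
      have h1 := List.Nodup.length_le_card hc.support_nodup
      have h2 := c.length_support
      have h3 : c.support.tail.length = c.support.length - 1 := by simp
      rw [hcardS] at h1
      omega
    have hlen : c.length = Fintype.card ↥(A : Set V) := by omega
    have hall := aux_cycle_support_all hc hlen
    have hcGlen : (c.map ι.toHom).length = g + 1 := by rw [Walk.length_map]; omega
    have hcGsup : ∀ x ∈ A, x ∈ (c.map ι.toHom).support := by
      intro x hx
      rw [Walk.support_map]
      exact List.mem_map.mpr ⟨⟨x, hx⟩, hall _, rfl⟩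
    refine ⟨hconn, ?_⟩
    intro a haA
    obtain ⟨b, d, h1, h2, r, hr, har, hrlen, hsup, hedg⟩ := aux_cycle_decomp hcG (hcGsup a haA)
    refine le_antisymm ?_ (hmin a haA)
    have hsub : (A.filter fun x => G.Adj a x) ⊆ {b, d} := by
      intro x hx
      obtain ⟨hxA, hax⟩ := Finset.mem_filter.mp hx
      have hmem : s(a, x) ∈ (c.map ι.toHom).edges :=
        aux_chord_mem hg hgirth hcG hcGlen hax (hcGsup a haA) (hcGsup x hxA)
      rcases (hedg _).mp hmem with he | he | he
      · rw [Sym2.eq_iff] at he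
        rcases he with ⟨-, hxb⟩ | ⟨hab, -⟩
        · simp [hxb]
        · exact absurd hab h1.ne
      · rw [Sym2.eq_iff] at he
        rcases he with ⟨-, hxd⟩ | ⟨had, -⟩
        · simp [hxd]
        · exact absurd had h2.ne
      · exact absurd (Walk.fst_mem_support_of_mem_edges r he) har
    calc (A.filter fun x => G.Adj a x).card ≤ ({b, d} : Finset V).card :=
          Finset.card_le_card hsub
      _ ≤ 2 := (Finset.card_insert_le b {d}).trans (by simp)
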